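/- The functions B, B', B'' : ℕ² → ℂ defined on odd coprime-to-2 pairs by B(a,b) = 𝟙_{2∤ab}·(b/a) (Kronecker symbol), B'(a,b) = 𝟙_{2∤ab}·(2b/a), B''(a,b) = 𝟙_{2∤ab}·(b/2a) are bi-characters with slopes at most 8; in particular, for each fixed odd a ≥ 1, the map n ↦ 𝟙_{2∤n}·(n/a) is a Dirichlet character of modulus 2a, and for each fixed odd b ≥ 1, the map n ↦ 𝟙_{2∤n}·(−1)^{((b−1)/2)((n−1)/2)}·(n/b) is a Dirichlet character of modulus 4b which agrees with n ↦ 𝟙_{2∤n}·(b/n) on positive integers by quadratic reciprocity. -/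

import Mathlib

/-- The Kronecker symbol `(n/2) = (2/n)`: `1` if `n ≡ ±1 (mod 8)`, `-1` if
`n ≡ ±3 (mod 8)`, and `0` if `n` is even. -/
def kron2 (n : ℕ) : ℤ :=
  if n % 8 = 1 ∨ n % 8 = 7 then 1 else if n % 8 = 3 ∨ n % 8 = 5 then -1 else 0

/-- `B(a,b) = 𝟙_{2∤ab} (b/a)` (Kronecker symbol). -/
def krB (a b : ℕ) : ℂ := if Odd (a * b) then ((jacobiSym b a : ℤ) : ℂ) else 0

/-- `B'(a,b) = 𝟙_{2∤ab} (2b/a)`. -/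
def krB' (a b : ℕ) : ℂ := if Odd (a * b) then ((jacobiSym (2 * b) a : ℤ) : ℂ) else 0

/-- `B''(a,b) = 𝟙_{2∤ab} (b/2a) = 𝟙_{2∤ab} (b/2)(b/a)`. -/
def krB'' (a b : ℕ) : ℂ :=
  if Odd (a * b) then ((kron2 b : ℂ) * ((jacobiSym b a : ℤ) : ℂ)) else 0

/-- A bi-character with slopes `c₁, c₂`: each row `B(a,−)` is a bounded multiple of a
Dirichlet character of modulus `c₁·a`, and each column `B(−,b)` is a bounded multiple
of a Dirichlet character of modulus `c₂·b`. -/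
def IsBiCharacter (B : ℕ → ℕ → ℂ) (c₁ c₂ : ℕ) : Prop :=
  (∀ a : ℕ, 1 ≤ a → ∃ (χ : DirichletCharacter ℂ (c₁ * a)) (M : ℂ), ‖M‖ ≤ 1 ∧
      ∀ n : ℕ, 1 ≤ n → B a n = M * χ (n : ZMod (c₁ * a))) ∧
  (∀ b : ℕ, 1 ≤ b → ∃ (ψ : DirichletCharacter ℂ (c₂ * b)) (N : ℂ), ‖N‖ ≤ 1 ∧
      ∀ n : ℕ, 1 ≤ n → B n b = N * ψ (n : ZMod (c₂ * b)))



lemma exists_dirichletChar {N : ℕ} [NeZero N] (f : ℕ → ℂ)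
    (h1 : f 1 = 1)
    (hmul : ∀ m n, f (m * n) = f m * f n)
    (hper : ∀ m n, m % N = n % N → f m = f n)
    (h0 : ∀ n, ¬ n.Coprime N → f n = 0) :
    ∃ χ : DirichletCharacter ℂ N, ∀ n : ℕ, χ (n : ZMod N) = f n := by
  refine ⟨{ toFun := fun x => f x.val,
            map_one' := ?_,
            map_mul' := ?_,
            map_nonunit' := ?_ }, ?_⟩
  · have h : (1 : ZMod N).val % N = 1 % N := by
      rw [← Nat.cast_one (R := ZMod N), ZMod.val_natCast, Nat.mod_mod_of_dvd _ dvd_rfl]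
    rw [hper _ _ h, ← h1]
  · intro x y
    have h : (x * y).val % N = (x.val * y.val) % N := by
      rw [ZMod.val_mul, Nat.mod_mod_of_dvd _ dvd_rfl]
    rw [hper _ _ h, hmul]
  · intro x hx
    refine h0 _ ?_
    rwa [← ZMod.isUnit_iff_coprime, ZMod.natCast_val, ZMod.cast_id]
  · intro n
    simp only [MulChar.coe_mk, MonoidHom.coe_mk, OneHom.coe_mk]
    refine hper _ _ ?_
    rw [ZMod.val_natCast, Nat.mod_mod_of_dvd _ dvd_rfl]

lemma kron2_eq (n : ℕ) : kron2 n = ZMod.χ₈ (n : ZMod 8) := by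
  rw [ZMod.χ₈_nat_eq_if_mod_eight]
  unfold kron2
  have h8 : n % 8 < 8 := Nat.mod_lt _ (by norm_num)
  have h2 : n % 2 = n % 8 % 2 := (Nat.mod_mod_of_dvd n (by norm_num)).symm
  interval_cases h : n % 8 <;> simp_all

lemma jac_norm_le (a : ℤ) (b : ℕ) : ‖((jacobiSym a b : ℤ) : ℂ)‖ ≤ 1 := by
  rcases jacobiSym.trichotomy a b with h | h | h <;> rw [h] <;> norm_num

lemma kron2_norm_le (b : ℕ) : ‖((kron2 b : ℤ) : ℂ)‖ ≤ 1 := by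
  unfold kron2; split_ifs <;> norm_num

lemma coprime_of_odd {n N : ℕ} (hn : Odd n) (hN : ∃ k, N = 2 ^ k) : Nat.Coprime n N := by
  obtain ⟨k, rfl⟩ := hN
  exact (Nat.coprime_two_right.mpr hn).pow_right k

lemma odd_of_mod {m n N : ℕ} (hN : 2 ∣ N) (h : m % N = n % N) : (Odd m ↔ Odd n) := by
  rw [Nat.odd_iff, Nat.odd_iff, ← Nat.mod_mod_of_dvd m hN, ← Nat.mod_mod_of_dvd n hN, h]

lemma jac_mod {m n a N : ℕ} (ha : a ∣ N) (h : m % N = n % N) :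
    jacobiSym m a = jacobiSym n a := by
  refine jacobiSym.mod_left' ?_
  have : m % a = n % a := by
    rw [← Nat.mod_mod_of_dvd m ha, ← Nat.mod_mod_of_dvd n ha, h]
  omega

lemma sign_eq {n : ℕ} (hn : Odd n) (c : ℕ) :
    ((-1 : ℤ)) ^ (c * ((n - 1) / 2)) = (ZMod.χ₄ (n : ZMod 4)) ^ c := by
  have h2 : n % 2 = 1 := Nat.odd_iff.mp hn
  have hd : (n - 1) / 2 = n / 2 := by omega
  rw [hd, ZMod.χ₄_eq_neg_one_pow h2, mul_comm, pow_mul]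

lemma lemPsi {b : ℕ} (hb : Odd b) (hb1 : 1 ≤ b) :
    ∃ ψ : DirichletCharacter ℂ (4 * b),
      (∀ n : ℕ, ψ (n : ZMod (4 * b)) =
        if Odd n then
          ((((-1 : ℤ) ^ (((b - 1) / 2) * ((n - 1) / 2)) * jacobiSym n b : ℤ)) : ℂ)
        else 0) ∧
      (∀ n : ℕ, 1 ≤ n → ψ (n : ZMod (4 * b)) =
        if Odd n then ((jacobiSym b n : ℤ) : ℂ) else 0) := by
  haveI : NeZero (4 * b) := ⟨by omega⟩
  haveI : NeZero b := ⟨by omega⟩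
  set c := (b - 1) / 2 with hc
  have main : ∃ χ : DirichletCharacter ℂ (4 * b), ∀ n : ℕ, χ (n : ZMod (4 * b)) =
      (fun n => if Odd n then
        ((((-1 : ℤ) ^ (c * ((n - 1) / 2)) * jacobiSym n b : ℤ)) : ℂ) else 0) n := by
    refine exists_dirichletChar _ ?_ ?_ ?_ ?_
    · norm_num [jacobiSym.one_left]
    · intro m n
      by_cases hm : Odd m <;> by_cases hn : Odd n <;>
        simp only [Nat.odd_mul, hm, hn, if_true, if_false, true_and, and_true, and_false,
          false_and, mul_zero, zero_mul]
      rw [← Int.cast_mul]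
      congr 1
      rw [sign_eq (hm.mul hn) c, sign_eq hm c, sign_eq hn c]
      push_cast
      rw [jacobiSym.mul_left, map_mul, mul_pow]
      ring
    · intro m n h
      have ho := odd_of_mod (N := 4 * b) ⟨2 * b, by ring⟩ h
      by_cases hn : Odd n
      · have hm := ho.mpr hn
        simp only [hm, hn, if_true]
        congr 1
        rw [sign_eq hm c, sign_eq hn c, jac_mod (⟨4, by ring⟩ : b ∣ 4 * b) h]
        congr 2
        have h4 : m % 4 = n % 4 := by
          have := Nat.mod_mod_of_dvd m (⟨b, rfl⟩ : (4:ℕ) ∣ 4 * b)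
          have := Nat.mod_mod_of_dvd n (⟨b, rfl⟩ : (4:ℕ) ∣ 4 * b)
          omega
        exact congrArg _ ((ZMod.natCast_eq_natCast_iff' m n 4).mpr h4)
      · simp [hn, ho]
    · intro n hn
      by_cases h : Odd n
      · simp only [h, if_true]
        have hco : ¬ n.Coprime b := fun hcb => hn
          (Nat.Coprime.mul_right (coprime_of_odd h ⟨2, rfl⟩) hcb)
        rw [jacobiSym.eq_zero_iff_not_coprime.mpr (by simpa [Int.gcd_natCast_natCast] using hco)]
        simp
      · simp [h]

  obtain ⟨ψ, hψ⟩ := main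
  refine ⟨ψ, fun n => hψ n, fun n hn1 => ?_⟩
  rw [hψ n]
  by_cases hn : Odd n
  · simp only [hn, if_true]
    rw [jacobiSym.quadratic_reciprocity hb hn]
    have e1 : c = b / 2 := by
      have hb2 : b % 2 = 1 := Nat.odd_iff.mp hb
      omega
    have e2 : (n - 1) / 2 = n / 2 := by
      have h2 : n % 2 = 1 := Nat.odd_iff.mp hn
      omega
    rw [e1, e2]
  · simp [hn]

lemma lemA {a : ℕ} (ha : Odd a) (ha1 : 1 ≤ a) :
    ∃ χ : DirichletCharacter ℂ (2 * a), ∀ n : ℕ,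
      χ (n : ZMod (2 * a)) = if Odd n then ((jacobiSym n a : ℤ) : ℂ) else 0 := by
  haveI : NeZero (2 * a) := ⟨by omega⟩
  refine exists_dirichletChar _ ?_ ?_ ?_ ?_
  · simp [jacobiSym.one_left]
  · intro m n
    by_cases hm : Odd m <;> by_cases hn : Odd n <;>
      simp [Nat.odd_mul, hm, hn, Nat.cast_mul, jacobiSym.mul_left]
  · intro m n h
    have ho := odd_of_mod (N := 2 * a) ⟨a, rfl⟩ h
    by_cases hn : Odd n
    · simp only [ho.mpr hn, hn, if_true]
      rw [jac_mod (⟨2, by ring⟩) h]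
    · simp [hn, ho]
  · intro n hn
    by_cases h : Odd n
    · simp only [h, if_true]
      have hco : ¬ n.Coprime a := fun hc => hn (Nat.Coprime.mul_right
        (Nat.coprime_two_right.mpr h) hc)
      haveI : NeZero a := ⟨by omega⟩
      rw [jacobiSym.eq_zero_iff_not_coprime.mpr (by simpa [Int.gcd_natCast_natCast] using hco)]
      simp
    · simp [h]

lemma lemC {b : ℕ} (hb : Odd b) (hb1 : 1 ≤ b) :
    ∃ χ : DirichletCharacter ℂ (8 * b), ∀ n : ℕ,
      χ (n : ZMod (8 * b)) = if Odd n then ((jacobiSym (2 * b) n : ℤ) : ℂ) else 0 := by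
  haveI : NeZero (8 * b) := ⟨by omega⟩
  refine exists_dirichletChar _ ?_ ?_ ?_ ?_
  · simp [jacobiSym.one_right]
  · intro m n
    by_cases hm : Odd m <;> by_cases hn : Odd n <;>
      simp only [Nat.odd_mul, hm, hn, if_true, if_false, true_and, and_true, and_false,
        false_and, mul_zero, zero_mul]
    rw [jacobiSym.mul_right' _ hm.pos.ne' hn.pos.ne']
    push_cast
    ring
  · intro m n h
    have ho := odd_of_mod (N := 8 * b) ⟨4 * b, by ring⟩ h
    by_cases hn : Odd n
    · have hm := ho.mpr hn
      simp only [hm, hn, if_true]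
      rw [jacobiSym.mul_left 2 (b : ℤ) m, jacobiSym.mul_left 2 (b : ℤ) n]
      have h8 : m % 8 = n % 8 := by
        have := Nat.mod_mod_of_dvd m (⟨b, rfl⟩ : (8:ℕ) ∣ 8 * b)
        have := Nat.mod_mod_of_dvd n (⟨b, rfl⟩ : (8:ℕ) ∣ 8 * b)
        omega
      have h4b : m % (4 * b) = n % (4 * b) := by
        rw [← Nat.mod_mod_of_dvd m (⟨2, by ring⟩ : 4 * b ∣ 8 * b),
          ← Nat.mod_mod_of_dvd n (⟨2, by ring⟩ : 4 * b ∣ 8 * b), h]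
      rw [jacobiSym.at_two hm, jacobiSym.at_two hn,
        congrArg ZMod.χ₈ ((ZMod.natCast_eq_natCast_iff' m n 8).mpr h8),
        jacobiSym.mod_right (b : ℤ) hm, jacobiSym.mod_right (b : ℤ) hn]
      simp [h4b]
    · simp [hn, ho]
  · intro n hn
    by_cases h : Odd n
    · simp only [h, if_true]
      haveI : NeZero n := ⟨h.pos.ne'⟩
      have hco : ¬ n.Coprime b := fun hcb => hn
        (Nat.Coprime.mul_right (coprime_of_odd h ⟨3, rfl⟩) hcb)
      have : Int.gcd (2 * (b : ℤ)) n ≠ 1 := by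
        intro hg
        have hg' : Nat.gcd (2 * b) n = 1 := by
          simpa [Int.gcd, Int.natAbs_mul] using hg
        exact hco (Nat.Coprime.coprime_dvd_left (⟨2, by ring⟩ : b ∣ 2 * b) hg').symm
      rw [jacobiSym.eq_zero_iff_not_coprime.mpr this]
      simp
    · simp [h]

lemma lemD {a : ℕ} (ha : Odd a) (ha1 : 1 ≤ a) :
    ∃ χ : DirichletCharacter ℂ (8 * a), ∀ n : ℕ,
      χ (n : ZMod (8 * a)) =
        if Odd n then ((kron2 n : ℂ) * ((jacobiSym n a : ℤ) : ℂ)) else 0 := by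
  haveI : NeZero (8 * a) := ⟨by omega⟩
  refine exists_dirichletChar _ ?_ ?_ ?_ ?_
  · norm_num [kron2, jacobiSym.one_left]
  · intro m n
    by_cases hm : Odd m <;> by_cases hn : Odd n <;>
      simp only [Nat.odd_mul, hm, hn, if_true, if_false, true_and, and_true, and_false,
        false_and, mul_zero, zero_mul]
    have hk : kron2 (m * n) = kron2 m * kron2 n := by
      rw [kron2_eq, kron2_eq, kron2_eq, Nat.cast_mul, map_mul]
    have hj : jacobiSym (m * n : ℕ) a = jacobiSym m a * jacobiSym n a := by
      rw [Nat.cast_mul, jacobiSym.mul_left]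
    rw [hk, hj]
    push_cast
    ring
  · intro m n h
    have ho := odd_of_mod (N := 8 * a) ⟨4 * a, by ring⟩ h
    by_cases hn : Odd n
    · have hm := ho.mpr hn
      simp only [hm, hn, if_true]
      have h8 : m % 8 = n % 8 := by
        have := Nat.mod_mod_of_dvd m (⟨a, rfl⟩ : (8:ℕ) ∣ 8 * a)
        have := Nat.mod_mod_of_dvd n (⟨a, rfl⟩ : (8:ℕ) ∣ 8 * a)
        omega
      have hk : kron2 m = kron2 n := by unfold kron2; rw [h8]
      rw [hk, jac_mod (⟨8, by ring⟩ : a ∣ 8 * a) h]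
    · simp [hn, ho]
  · intro n hn
    by_cases h : Odd n
    · simp only [h, if_true]
      haveI : NeZero a := ⟨by omega⟩
      have hco : ¬ n.Coprime a := fun hca => hn
        (Nat.Coprime.mul_right (coprime_of_odd h ⟨3, rfl⟩) hca)
      rw [jacobiSym.eq_zero_iff_not_coprime.mpr (by simpa [Int.gcd_natCast_natCast] using hco)]
      simp
    · simp [h]

/-- `B`, `B'`, `B''` are bi-characters with slopes at most `8`; in particular for odd
`a ≥ 1` the map `n ↦ 𝟙_{2∤n}(n/a)` is a Dirichlet character of modulus `2a`, and for
odd `b ≥ 1` the map `n ↦ 𝟙_{2∤n}(−1)^{((b−1)/2)((n−1)/2)}(n/b)` is a Dirichlet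
character of modulus `4b` agreeing with `n ↦ 𝟙_{2∤n}(b/n)` on positive integers. -/
theorem kronecker_bi_characters :
    (∃ c₁ c₂ : ℕ, 1 ≤ c₁ ∧ c₁ ≤ 8 ∧ 1 ≤ c₂ ∧ c₂ ≤ 8 ∧ IsBiCharacter krB c₁ c₂) ∧
    (∃ c₁ c₂ : ℕ, 1 ≤ c₁ ∧ c₁ ≤ 8 ∧ 1 ≤ c₂ ∧ c₂ ≤ 8 ∧ IsBiCharacter krB' c₁ c₂) ∧
    (∃ c₁ c₂ : ℕ, 1 ≤ c₁ ∧ c₁ ≤ 8 ∧ 1 ≤ c₂ ∧ c₂ ≤ 8 ∧ IsBiCharacter krB'' c₁ c₂) ∧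
    (∀ a : ℕ, Odd a → 1 ≤ a → ∃ χ : DirichletCharacter ℂ (2 * a),
        ∀ n : ℕ, χ (n : ZMod (2 * a)) =
          if Odd n then ((jacobiSym n a : ℤ) : ℂ) else 0) ∧
    (∀ b : ℕ, Odd b → 1 ≤ b → ∃ ψ : DirichletCharacter ℂ (4 * b),
        (∀ n : ℕ, ψ (n : ZMod (4 * b)) =
          if Odd n then
            ((((-1 : ℤ) ^ (((b - 1) / 2) * ((n - 1) / 2)) * jacobiSym n b : ℤ)) : ℂ)
          else 0) ∧
        (∀ n : ℕ, 1 ≤ n → ψ (n : ZMod (4 * b)) =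
          if Odd n then ((jacobiSym b n : ℤ) : ℂ) else 0)) := by
  refine ⟨⟨2, 4, by norm_num, by norm_num, by norm_num, by norm_num, ?_, ?_⟩,
    ⟨2, 8, by norm_num, by norm_num, by norm_num, by norm_num, ?_, ?_⟩,
    ⟨8, 4, by norm_num, by norm_num, by norm_num, by norm_num, ?_, ?_⟩,
    fun a ha ha1 => lemA ha ha1, fun b hb hb1 => lemPsi hb hb1⟩
  · -- krB rows, modulus 2a
    intro a ha1
    by_cases hodd : Odd a
    · obtain ⟨χ, hχ⟩ := lemA hodd ha1
      exact ⟨χ, 1, by norm_num, fun n _ => by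
        rw [hχ n, one_mul]; simp [krB, Nat.odd_mul, hodd]⟩
    · exact ⟨1, 0, by norm_num, fun n _ => by simp [krB, Nat.odd_mul, hodd]⟩
  · -- krB columns, modulus 4b
    intro b hb1
    by_cases hodd : Odd b
    · obtain ⟨ψ, _, h2⟩ := lemPsi hodd hb1
      exact ⟨ψ, 1, by norm_num, fun n hn => by
        rw [h2 n hn, one_mul]; simp [krB, Nat.odd_mul, hodd]⟩
    · exact ⟨1, 0, by norm_num, fun n _ => by simp [krB, Nat.odd_mul, hodd]⟩
  · -- krB' rows, modulus 2a
    intro a ha1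
    by_cases hodd : Odd a
    · obtain ⟨χ, hχ⟩ := lemA hodd ha1
      refine ⟨χ, ((jacobiSym 2 a : ℤ) : ℂ), jac_norm_le 2 a, fun n _ => ?_⟩
      rw [hχ n]
      by_cases hn : Odd n
      · simp only [krB', Nat.odd_mul, hodd, hn, and_true, true_and, if_true]
        rw [← Int.cast_mul, ← jacobiSym.mul_left]
      · simp [krB', Nat.odd_mul, hodd, hn]
    · exact ⟨1, 0, by norm_num, fun n _ => by simp [krB', Nat.odd_mul, hodd]⟩
  · -- krB' columns, modulus 8b
    intro b hb1
    by_cases hodd : Odd b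
    · obtain ⟨χ, hχ⟩ := lemC hodd hb1
      exact ⟨χ, 1, by norm_num, fun n _ => by
        rw [hχ n, one_mul]; simp [krB', Nat.odd_mul, hodd]⟩
    · exact ⟨1, 0, by norm_num, fun n _ => by simp [krB', Nat.odd_mul, hodd]⟩
  · -- krB'' rows, modulus 8a
    intro a ha1
    by_cases hodd : Odd a
    · obtain ⟨χ, hχ⟩ := lemD hodd ha1
      exact ⟨χ, 1, by norm_num, fun n _ => by
        rw [hχ n, one_mul]; simp [krB'', Nat.odd_mul, hodd]⟩
    · exact ⟨1, 0, by norm_num, fun n _ => by simp [krB'', Nat.odd_mul, hodd]⟩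
  · -- krB'' columns, modulus 4b
    intro b hb1
    by_cases hodd : Odd b
    · obtain ⟨ψ, _, h2⟩ := lemPsi hodd hb1
      refine ⟨ψ, ((kron2 b : ℤ) : ℂ), kron2_norm_le b, fun n hn => ?_⟩
      rw [h2 n hn]
      by_cases hno : Odd n
      · simp [krB'', Nat.odd_mul, hodd, hno]
      · simp [krB'', Nat.odd_mul, hodd, hno]
    · exact ⟨1, 0, by norm_num, fun n _ => by simp [krB'', Nat.odd_mul, hodd]⟩
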